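/- Let b : ℝ → ℝ be continuous and let η < η₀ be real numbers. Define ρ(θ,ζ) = √(cos²θ·e^{−2b(ζ)} + sin²θ·e^{2b(ζ)}) and K(θ) = ∫_η^{η₀} ρ(θ,ζ)^{−3} dζ, so that ∂x/∂θ = −sinθ·K(θ) is the angular derivative of the conformal light-cone coordinate x. Then ∫₀^{2π} |∂x/∂θ| dθ = ∫₀^{2π} |sinθ|·K(θ) dθ = 4·∫_η^{η₀} e^{−b(s)} ds. -/

import Mathlib

open Real Filter intervalIntegral

lemma g_pos (A C : ℝ) (hA : 0 < A) (hC : 0 < C) (θ : ℝ) :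
    0 < Real.cos θ ^ 2 * A + Real.sin θ ^ 2 * C := by
  have h := Real.sin_sq_add_cos_sq θ
  rcases le_total A C with h1 | h1
  · nlinarith [mul_nonneg (sq_nonneg (Real.sin θ)) (sub_nonneg.2 h1)]
  · nlinarith [mul_nonneg (sq_nonneg (Real.cos θ)) (sub_nonneg.2 h1)]

lemma hasDeriv_F (A C : ℝ) (hA : 0 < A) (hC : 0 < C) (θ : ℝ) :
    HasDerivAt (fun x => -Real.cos x / (C * Real.sqrt (Real.cos x ^ 2 * A + Real.sin x ^ 2 * C)))
      (Real.sin θ / (Real.sqrt (Real.cos θ ^ 2 * A + Real.sin θ ^ 2 * C)) ^ 3) θ := by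
  set g : ℝ → ℝ := fun x => Real.cos x ^ 2 * A + Real.sin x ^ 2 * C with hgdef
  have hg : 0 < g θ := g_pos A C hA hC θ
  have hgd : HasDerivAt g (2 * Real.cos θ ^ 1 * (-Real.sin θ) * A
      + 2 * Real.sin θ ^ 1 * Real.cos θ * C) θ := by
    exact (((Real.hasDerivAt_cos θ).pow 2).mul_const A).add
      (((Real.hasDerivAt_sin θ).pow 2).mul_const C)
  have hsq : HasDerivAt (fun x => Real.sqrt (g x))
      (1 / (2 * Real.sqrt (g θ)) * (2 * Real.cos θ ^ 1 * (-Real.sin θ) * A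
        + 2 * Real.sin θ ^ 1 * Real.cos θ * C)) θ :=
    (Real.hasDerivAt_sqrt hg.ne').comp θ hgd
  set s := Real.sqrt (g θ) with hsdef
  have hs0 : 0 < s := Real.sqrt_pos.mpr hg
  have hs : s ^ 2 = g θ := Real.sq_sqrt hg.le
  have hd : HasDerivAt (fun x => C * Real.sqrt (g x))
      (C * (1 / (2 * s) * (2 * Real.cos θ ^ 1 * (-Real.sin θ) * A
        + 2 * Real.sin θ ^ 1 * Real.cos θ * C))) θ := hsq.const_mul C
  have hn : HasDerivAt (fun x => -Real.cos x) (Real.sin θ) θ := by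
    have := (Real.hasDerivAt_cos θ).neg; rwa [neg_neg] at this
  have hdiv := hn.div hd (by positivity)
  refine hdiv.congr_deriv (Eq.symm ?_)
  have hpyth : Real.sin θ ^ 2 + Real.cos θ ^ 2 = 1 := Real.sin_sq_add_cos_sq θ
  have hgval : g θ = Real.cos θ ^ 2 * A + Real.sin θ ^ 2 * C := rfl
  rw [hgval] at hs
  have hsw : Real.sqrt (Real.sin θ ^ 2 * C + Real.cos θ ^ 2 * A) = s := by
    rw [hsdef, hgval]; ring_nf
  field_simp
  ring_nf
  rw [← hsdef]
  linear_combination (-(Real.sin θ*s^2))*hs + (-(Real.sin θ*s^2*C))*hpyth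

lemma inner_integral (B : ℝ) :
    (∫ θ in (0:ℝ)..(2 * π), |Real.sin θ| *
      (1 / (Real.sqrt (Real.cos θ ^ 2 * Real.exp (-(2 * B)) + Real.sin θ ^ 2 * Real.exp (2 * B))) ^ 3))
      = 4 * Real.exp (-B) := by
  set A := Real.exp (-(2 * B)) with hAdef
  set C := Real.exp (2 * B) with hCdef
  have hA : 0 < A := Real.exp_pos _
  have hC : 0 < C := Real.exp_pos _
  have hsA : Real.sqrt A = Real.exp (-B) := by
    rw [show A = Real.exp (-B) ^ 2 by rw [sq, ← Real.exp_add, hAdef]; congr 1; ring]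
    exact Real.sqrt_sq (Real.exp_pos _).le
  have hCe : C * Real.exp (-B) = Real.exp B := by
    rw [hCdef, ← Real.exp_add]; ring_nf
  set g : ℝ → ℝ := fun x => Real.cos x ^ 2 * A + Real.sin x ^ 2 * C with hgdef
  have hgc : Continuous g := by fun_prop
  have hgpos : ∀ x, 0 < g x := fun x => g_pos A C hA hC x
  have hsne : ∀ x, (Real.sqrt (g x)) ^ 3 ≠ 0 :=
    fun x => pow_ne_zero 3 (Real.sqrt_pos.mpr (hgpos x)).ne'
  have hcont : Continuous (fun θ => |Real.sin θ| * (1 / (Real.sqrt (g θ)) ^ 3)) := by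
    apply Continuous.mul Real.continuous_sin.abs
    exact continuous_const.div ((Real.continuous_sqrt.comp hgc).pow 3) hsne
  have hcont2 : Continuous (fun θ => Real.sin θ / (Real.sqrt (g θ)) ^ 3) :=
    Real.continuous_sin.div ((Real.continuous_sqrt.comp hgc).pow 3) hsne
  have hcont3 : Continuous (fun θ => -Real.sin θ / (Real.sqrt (g θ)) ^ 3) :=
    Real.continuous_sin.neg.div ((Real.continuous_sqrt.comp hgc).pow 3) hsne
  -- values at endpoints
  have hg0 : g 0 = A := by simp [hgdef]
  have hgpi : g π = A := by simp [hgdef]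
  have hg2pi : g (2 * π) = A := by simp [hgdef]
  -- first piece
  have h1 : (∫ θ in (0:ℝ)..π, |Real.sin θ| * (1 / (Real.sqrt (g θ)) ^ 3))
      = 2 * Real.exp (-B) := by
    have he : (∫ θ in (0:ℝ)..π, |Real.sin θ| * (1 / (Real.sqrt (g θ)) ^ 3))
        = ∫ θ in (0:ℝ)..π, Real.sin θ / (Real.sqrt (g θ)) ^ 3 := by
      apply intervalIntegral.integral_congr
      intro θ hθ
      rw [Set.uIcc_of_le Real.pi_nonneg] at hθ
      simp only [abs_of_nonneg (Real.sin_nonneg_of_nonneg_of_le_pi hθ.1 hθ.2), mul_one_div]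
    rw [he, intervalIntegral.integral_eq_sub_of_hasDerivAt
      (fun θ _ => hasDeriv_F A C hA hC θ) (hcont2.intervalIntegrable _ _)]
    show -Real.cos π / (C * Real.sqrt (g π)) - -Real.cos 0 / (C * Real.sqrt (g 0)) = _
    rw [hgpi, hg0, hsA, Real.cos_pi, Real.cos_zero, hCe]
    rw [Real.exp_neg]
    field_simp
    ring
  -- second piece
  have hF2 : ∀ θ : ℝ, HasDerivAt
      (fun x => Real.cos x / (C * Real.sqrt (Real.cos x ^ 2 * A + Real.sin x ^ 2 * C)))
      (-Real.sin θ / (Real.sqrt (Real.cos θ ^ 2 * A + Real.sin θ ^ 2 * C)) ^ 3) θ := by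
    intro θ
    have := (hasDeriv_F A C hA hC θ).fun_neg
    simpa [neg_div] using this
  have h2 : (∫ θ in π..(2 * π), |Real.sin θ| * (1 / (Real.sqrt (g θ)) ^ 3))
      = 2 * Real.exp (-B) := by
    have he : (∫ θ in π..(2 * π), |Real.sin θ| * (1 / (Real.sqrt (g θ)) ^ 3))
        = ∫ θ in π..(2 * π), -Real.sin θ / (Real.sqrt (g θ)) ^ 3 := by
      apply intervalIntegral.integral_congr
      intro θ hθ
      rw [Set.uIcc_of_le (by linarith [Real.pi_pos] : π ≤ 2 * π)] at hθ
      have hsin : Real.sin θ ≤ 0 := by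
        rw [← Real.sin_sub_two_pi]
        apply Real.sin_nonpos_of_nonpos_of_neg_pi_le
        · linarith [hθ.1, hθ.2]
        · linarith [hθ.1, hθ.2]
      simp only [abs_of_nonpos hsin, mul_one_div]
    rw [he, intervalIntegral.integral_eq_sub_of_hasDerivAt
      (fun θ _ => hF2 θ) (hcont3.intervalIntegrable _ _)]
    show Real.cos (2 * π) / (C * Real.sqrt (g (2 * π))) - Real.cos π / (C * Real.sqrt (g π)) = _
    rw [hg2pi, hgpi, hsA, Real.cos_pi, Real.cos_two_pi, hCe]
    rw [Real.exp_neg]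
    field_simp
    ring
  calc (∫ θ in (0:ℝ)..(2 * π), |Real.sin θ| * (1 / (Real.sqrt (g θ)) ^ 3))
      = (∫ θ in (0:ℝ)..π, |Real.sin θ| * (1 / (Real.sqrt (g θ)) ^ 3))
        + ∫ θ in π..(2 * π), |Real.sin θ| * (1 / (Real.sqrt (g θ)) ^ 3) := by
        rw [intervalIntegral.integral_add_adjacent_intervals
          (hcont.intervalIntegrable _ _) (hcont.intervalIntegrable _ _)]
    _ = 4 * Real.exp (-B) := by rw [h1, h2]; ring

/-- Exact angular integral identity for conformal light-cone coordinates in a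
1+2-dimensional Bianchi I spacetime:
`∫₀^{2π} |∂x/∂θ| dθ = ∫₀^{2π} |sinθ|·K(θ) dθ = 4∫_η^{η₀} e^{−b(s)} ds`. -/
theorem stmt_8 (b : ℝ → ℝ) (hb : Continuous b) (η η₀ : ℝ) (hη : η < η₀)
    (ρ : ℝ → ℝ → ℝ)
    (hρ : ∀ θ ζ, ρ θ ζ = Real.sqrt ((Real.cos θ) ^ 2 * Real.exp (-(2 * b ζ)) +
      (Real.sin θ) ^ 2 * Real.exp (2 * b ζ)))
    (K : ℝ → ℝ)
    (hK : ∀ θ, K θ = ∫ ζ in η..η₀, 1 / (ρ θ ζ) ^ 3) :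
    (∫ θ in (0:ℝ)..(2 * π), |(-Real.sin θ) * K θ|) =
      ∫ θ in (0:ℝ)..(2 * π), |Real.sin θ| * K θ ∧
    (∫ θ in (0:ℝ)..(2 * π), |Real.sin θ| * K θ) =
      4 * ∫ s in η..η₀, Real.exp (-(b s)) := by
  have hKnn : ∀ θ, 0 ≤ K θ := by
    intro θ
    rw [hK]
    apply intervalIntegral.integral_nonneg hη.le
    intro ζ _
    rw [hρ]
    positivity
  constructor
  · apply intervalIntegral.integral_congr
    intro θ _
    show |(-Real.sin θ) * K θ| = |Real.sin θ| * K θ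
    rw [abs_mul, abs_neg, abs_of_nonneg (hKnn θ)]
  · set f : ℝ → ℝ → ℝ := fun θ ζ => |Real.sin θ| *
      (1 / (Real.sqrt (Real.cos θ ^ 2 * Real.exp (-(2 * b ζ)) +
        Real.sin θ ^ 2 * Real.exp (2 * b ζ))) ^ 3) with hfdef
    have hstep : ∀ θ, |Real.sin θ| * K θ = ∫ ζ in η..η₀, f θ ζ := by
      intro θ
      rw [hK, ← intervalIntegral.integral_const_mul]
      apply intervalIntegral.integral_congr
      intro ζ _
      simp only [hfdef, hρ, mul_one_div]
    have hFc : Continuous (Function.uncurry f) := by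
      have hGc : Continuous (fun p : ℝ × ℝ => Real.cos p.1 ^ 2 * Real.exp (-(2 * b p.2)) +
          Real.sin p.1 ^ 2 * Real.exp (2 * b p.2)) := by fun_prop
      have hGpos : ∀ p : ℝ × ℝ, 0 < Real.cos p.1 ^ 2 * Real.exp (-(2 * b p.2)) +
          Real.sin p.1 ^ 2 * Real.exp (2 * b p.2) :=
        fun p => g_pos _ _ (Real.exp_pos _) (Real.exp_pos _) p.1
      apply Continuous.mul (by fun_prop : Continuous fun p : ℝ × ℝ => |Real.sin p.1|)
      exact continuous_const.div ((Real.continuous_sqrt.comp hGc).pow 3)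
        (fun p => pow_ne_zero 3 (Real.sqrt_pos.mpr (hGpos p)).ne')
    have h2pi : (0:ℝ) ≤ 2 * π := by positivity
    have hswap : (∫ θ in (0:ℝ)..(2 * π), ∫ ζ in η..η₀, f θ ζ)
        = ∫ ζ in η..η₀, ∫ θ in (0:ℝ)..(2 * π), f θ ζ := by
      simp only [intervalIntegral.integral_of_le hη.le,
        intervalIntegral.integral_of_le h2pi]
      apply MeasureTheory.integral_integral_swap
      rw [MeasureTheory.Measure.prod_restrict]
      apply MeasureTheory.IntegrableOn.mono_set
        (t := Set.Icc (0:ℝ) (2 * π) ×ˢ Set.Icc η η₀)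
      · exact hFc.continuousOn.integrableOn_compact (isCompact_Icc.prod isCompact_Icc)
      · exact Set.prod_mono Set.Ioc_subset_Icc_self Set.Ioc_subset_Icc_self
    have hinner : ∀ ζ, (∫ θ in (0:ℝ)..(2 * π), f θ ζ) = 4 * Real.exp (-(b ζ)) :=
      fun ζ => inner_integral (b ζ)
    calc (∫ θ in (0:ℝ)..(2 * π), |Real.sin θ| * K θ)
        = ∫ θ in (0:ℝ)..(2 * π), ∫ ζ in η..η₀, f θ ζ := by
          apply intervalIntegral.integral_congr; intro θ _; exact hstep θ
      _ = ∫ ζ in η..η₀, ∫ θ in (0:ℝ)..(2 * π), f θ ζ := hswap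
      _ = ∫ ζ in η..η₀, 4 * Real.exp (-(b ζ)) := by
          apply intervalIntegral.integral_congr; intro ζ _; exact hinner ζ
      _ = 4 * ∫ s in η..η₀, Real.exp (-(b s)) := intervalIntegral.integral_const_mul _ _
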